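/- Let k be a field, V a nonzero k-vector space, and R a subring of End_k(V) (containing the identity) that is triangular with respect to a well-ordered basis (B, ≤) of V. Then TNil(R), the set of topologically nilpotent elements of R, consists precisely of those transformations in R that are strictly triangular with respect to (B, ≤), and TNil(R) is a two-sided ideal of R. -/

import Mathlib

open Submodule

private lemma aux_pow_mono {k V : Type*} [Field k] [AddCommGroup V] [Module k V]
    (T : Module.End k V) {m n : ℕ} (h : m ≤ n) {v : V} (hv : (T ^ m) v = 0) :
    (T ^ n) v = 0 := by
  obtain ⟨d, rfl⟩ := Nat.exists_eq_add_of_le h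
  rw [add_comm, pow_add, Module.End.mul_apply, hv, map_zero]

/-- union of kernels of powers as a submodule -/
private def kerUnion {k V : Type*} [Field k] [AddCommGroup V] [Module k V]
    (T : Module.End k V) : Submodule k V where
  carrier := {v | ∃ m : ℕ, (T ^ m) v = 0}
  zero_mem' := ⟨0, map_zero _⟩
  add_mem' := by
    rintro a c ⟨m, hm⟩ ⟨n, hn⟩
    exact ⟨max m n, by
      rw [map_add, aux_pow_mono T (le_max_left m n) hm,
        aux_pow_mono T (le_max_right m n) hn, add_zero]⟩
  smul_mem' := by
    rintro r v ⟨m, hm⟩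
    exact ⟨m, by rw [map_smul, hm, smul_zero]⟩

/-- a triangular map preserves spans over lower sets -/
private lemma aux_inv {k V : Type*} [Field k] [AddCommGroup V] [Module k V]
    {ι : Type*} [LinearOrder ι] (b : Module.Basis ι k V) {T : Module.End k V}
    (hT : ∀ i : ι, T (b i) ∈ Submodule.span k (⇑b '' {j | j ≤ i}))
    {s : Set ι} (hs : ∀ ⦃j l : ι⦄, j ∈ s → l ≤ j → l ∈ s)
    {v : V} (hv : v ∈ span k (⇑b '' s)) : T v ∈ span k (⇑b '' s) := by
  induction hv using Submodule.span_induction with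
  | mem x hx =>
    obtain ⟨j, hj, rfl⟩ := hx
    exact span_mono (Set.image_mono (fun l hl => hs hj hl)) (hT j)
  | zero => simp
  | add x y _ _ hx hy => rw [map_add]; exact add_mem hx hy
  | smul c x _ hx => rw [map_smul]; exact smul_mem _ _ hx

/-- diagonal coefficient is multiplicative along triangular maps -/
private lemma aux_coord {k V : Type*} [Field k] [AddCommGroup V] [Module k V]
    {ι : Type*} [LinearOrder ι] (b : Module.Basis ι k V) {T : Module.End k V}
    (hT : ∀ i : ι, T (b i) ∈ Submodule.span k (⇑b '' {j | j ≤ i})) (i : ι)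
    {v : V} (hv : v ∈ span k (⇑b '' {j | j ≤ i})) :
    b.repr (T v) i = b.repr (T (b i)) i * b.repr v i := by
  induction hv using Submodule.span_induction with
  | mem x hx =>
    obtain ⟨j, hj, rfl⟩ := hx
    rcases eq_or_lt_of_le (hj : j ≤ i) with rfl | hji
    · simp
    · have h1 : b.repr (T (b j)) i = 0 := by
        by_contra h
        exact absurd (b.mem_span_image.mp (hT j) (Finsupp.mem_support_iff.mpr h))
          (not_le.mpr hji)
      rw [h1, Module.Basis.repr_self, Finsupp.single_apply, if_neg hji.ne, mul_zero]
  | zero => simp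
  | add x y _ _ hx hy => simp only [map_add, Finsupp.add_apply, hx, hy, mul_add]
  | smul c x _ hx =>
    simp only [map_smul, Finsupp.smul_apply, hx, smul_eq_mul]; ring

/-- strictly triangular implies topologically nilpotent (no subring needed) -/
private lemma aux_strict_nil {k V : Type*} [Field k] [AddCommGroup V] [Module k V]
    {ι : Type*} [LinearOrder ι] [WellFoundedLT ι] (b : Module.Basis ι k V) {T : Module.End k V}
    (hT : ∀ i : ι, T (b i) ∈ Submodule.span k (⇑b '' {j | j < i})) (v : V) :
    ∃ m : ℕ, 0 < m ∧ (T ^ m) v = 0 := by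
  have key : ∀ i : ι, b i ∈ kerUnion T := by
    intro i
    induction i using WellFoundedLT.induction with
    | ind i ih =>
      have h1 : span k (⇑b '' {j | j < i}) ≤ kerUnion T := by
        rw [span_le]
        rintro x ⟨j, hj, rfl⟩
        exact ih j hj
      obtain ⟨m, hm⟩ := h1 (hT i)
      exact ⟨m + 1, by rw [pow_succ, Module.End.mul_apply, hm]⟩
  have hv : v ∈ kerUnion T := by
    have : v ∈ span k (Set.range ⇑b) := by rw [b.span_eq]; trivial
    exact (span_le.mpr (by rintro x ⟨j, rfl⟩; exact key j)) this
  obtain ⟨m, hm⟩ := hv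
  exact ⟨m + 1, Nat.succ_pos m, aux_pow_mono T (Nat.le_succ m) hm⟩

/-- topologically nilpotent triangular implies strictly triangular -/
private lemma aux_nil_strict {k V : Type*} [Field k] [AddCommGroup V] [Module k V]
    {ι : Type*} [LinearOrder ι] (b : Module.Basis ι k V) {T : Module.End k V}
    (hT : ∀ i : ι, T (b i) ∈ Submodule.span k (⇑b '' {j | j ≤ i}))
    (hnil : ∀ v : V, ∃ m : ℕ, 0 < m ∧ (T ^ m) v = 0) (i : ι) :
    T (b i) ∈ Submodule.span k (⇑b '' {j | j < i}) := by
  have hlow : ∀ ⦃j l : ι⦄, j ∈ {j | j ≤ i} → l ≤ j → l ∈ {j | j ≤ i} :=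
    fun j l hj hl => le_trans hl hj
  have hmemS : ∀ m : ℕ, (T ^ m) (b i) ∈ span k (⇑b '' {j | j ≤ i}) := by
    intro m
    induction m with
    | zero =>
      simp
    | succ n ihn =>
      rw [pow_succ', Module.End.mul_apply]
      exact aux_inv b hT hlow ihn
  have hcoef : ∀ m : ℕ, b.repr ((T ^ m) (b i)) i = (b.repr (T (b i)) i) ^ m := by
    intro m
    induction m with
    | zero => simp
    | succ n ihn =>
      rw [pow_succ', Module.End.mul_apply, aux_coord b hT i (hmemS n), ihn, pow_succ']
  obtain ⟨m, hm, hzero⟩ := hnil (b i)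
  have hc : b.repr (T (b i)) i = 0 := by
    have := hcoef m
    rw [hzero] at this
    simp only [map_zero, Finsupp.coe_zero, Pi.zero_apply] at this
    exact pow_eq_zero_iff hm.ne' |>.mp this.symm
  have hsupp := b.mem_span_image.mp (hT i)
  rw [b.mem_span_image]
  intro j hj
  have hji : j ≤ i := hsupp hj
  rcases lt_or_eq_of_le hji with h | rfl
  · exact h
  · exact absurd hc (Finsupp.mem_support_iff.mp hj)

/-- if `R` is a unital subring of `End_k(V)` triangular with respect to a
well-ordered basis `(B, ≤)`, then the topologically nilpotent elements of `R` are exactly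
the elements of `R` that are strictly triangular with respect to `(B, ≤)`, and they form a
two-sided ideal of `R`. -/
theorem stmt_9 {k V : Type*} [Field k] [AddCommGroup V] [Module k V] [Nontrivial V]
    (R : Subring (Module.End k V))
    {ι : Type*} [LinearOrder ι] [WellFoundedLT ι] (b : Module.Basis ι k V)
    (htri : ∀ T ∈ R, ∀ i : ι, T (b i) ∈ Submodule.span k (⇑b '' {j | j ≤ i})) :
    (∀ T ∈ R, (∀ v : V, ∃ m : ℕ, 0 < m ∧ (T ^ m) v = 0) ↔
      (∀ i : ι, T (b i) ∈ Submodule.span k (⇑b '' {j | j < i}))) ∧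
    ∃ I : TwoSidedIdeal R, ∀ T : R,
      T ∈ I ↔ (∀ v : V, ∃ m : ℕ, 0 < m ∧ ((T : Module.End k V) ^ m) v = 0) := by
  have main : ∀ T ∈ R, (∀ v : V, ∃ m : ℕ, 0 < m ∧ (T ^ m) v = 0) ↔
      (∀ i : ι, T (b i) ∈ Submodule.span k (⇑b '' {j | j < i})) :=
    fun T hT => ⟨fun hnil => aux_nil_strict b (htri T hT) hnil,
      fun hstrict v => aux_strict_nil b hstrict v⟩
  refine ⟨main, ?_⟩
  have hltlow : ∀ (i : ι) ⦃j l : ι⦄, j ∈ {j | j < i} → l ≤ j → l ∈ {j | j < i} :=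
    fun i j l hj hl => lt_of_le_of_lt hl hj
  refine ⟨TwoSidedIdeal.mk'
    {T : R | ∀ i : ι, (T : Module.End k V) (b i) ∈ span k (⇑b '' {j | j < i})}
    (fun i => by simp) (fun {x y} hx hy i => by
      simpa using add_mem (hx i) (hy i))
    (fun {x} hx i => by simpa using neg_mem (hx i))
    (fun {x y} hy i => by
      show (x : Module.End k V) ((y : Module.End k V) (b i)) ∈ _
      exact aux_inv b (htri x x.2) (hltlow i) (hy i))
    (fun {x y} hx i => by
      show (x : Module.End k V) ((y : Module.End k V) (b i)) ∈ _
      have key : ∀ w, w ∈ span k (⇑b '' {j | j ≤ i}) →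
          (x : Module.End k V) w ∈ span k (⇑b '' {j | j < i}) := by
        intro w hw
        induction hw using Submodule.span_induction with
        | mem w hw =>
          obtain ⟨j, hj, rfl⟩ := hw
          rcases lt_or_eq_of_le (hj : j ≤ i) with h | rfl
          · exact span_mono (Set.image_mono (fun l hl =>
              lt_of_lt_of_le hl h.le)) (hx j)
          · exact hx j
        | zero => simp
        | add u w _ _ hu hw => rw [map_add]; exact add_mem hu hw
        | smul c u _ hu => rw [map_smul]; exact smul_mem _ _ hu
      exact key _ (htri y y.2 i)), ?_⟩
  intro T
  rw [TwoSidedIdeal.mem_mk']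
  exact (main T T.2).symm
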